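/- Let G = (√5+1)/2, g = G − 1, B = (5G−2)^{1/5} and q = (g/B)^4. Suppose (r_n)_{n≥0} is a sequence of positive reals with r_0 = 1 such that for every n ≥ 0, min over 1 ≤ j ≤ 5 of (r_n/r_{n+j})^{1/j} ≤ 1/B, and r_n/r_{n+1} ≤ G for all n. Then r_n ≥ q·B^n for all n ≥ 0. -/

import Mathlib

/-- Abstract growth lemma: if r 0 = 1, for each n some j ∈ {1,…,5} satisfies
(r n / r (n+j))^(1/j) ≤ 1/B, and r n / r (n+1) ≤ G for all n, then
r n ≥ q·Bⁿ with B = (5G−2)^(1/5), q = (g/B)⁴, g = G − 1, G = (√5+1)/2. -/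
theorem stmt16 (r : ℕ → ℝ) (hpos : ∀ n, 0 < r n) (h0 : r 0 = 1)
    (G g B q : ℝ) (hG : G = (Real.sqrt 5 + 1)/2) (hg : g = G - 1)
    (hB : B = (5*G - 2) ^ ((1:ℝ)/5)) (hq : q = (g/B)^4)
    (hmin : ∀ n : ℕ, ∃ j : ℕ, 1 ≤ j ∧ j ≤ 5 ∧
      (r n / r (n+j)) ^ ((1:ℝ)/j) ≤ 1/B)
    (hratio : ∀ n : ℕ, r n / r (n+1) ≤ G) :
    ∀ n : ℕ, q * B^n ≤ r n := by
  have h5 : Real.sqrt 5 ^ 2 = 5 := Real.sq_sqrt (by norm_num)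
  have hs2 : (2:ℝ) < Real.sqrt 5 := by nlinarith [Real.sqrt_nonneg 5]
  have hs3 : Real.sqrt 5 < 3 := by nlinarith [Real.sqrt_nonneg 5]
  have hG1 : 1 < G := by rw [hG]; linarith
  have hG2 : G < 2 := by rw [hG]; linarith
  have hgpos : 0 < g := by rw [hg]; linarith
  have hg1 : g < 1 := by rw [hg]; linarith
  have hgG : g * G = 1 := by rw [hg, hG]; nlinarith
  have hB1 : 1 < B := by
    rw [hB]
    exact (Real.one_lt_rpow_iff_of_pos (by linarith)).2
      (Or.inl ⟨by linarith, by norm_num⟩)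
  have hBpos : 0 < B := by linarith
  -- step: r (n+j) ≥ B^j * r n when hmin applies
  have hstep : ∀ n j : ℕ, 1 ≤ j → (r n / r (n+j)) ^ ((1:ℝ)/j) ≤ 1/B →
      B^j * r n ≤ r (n+j) := by
    intro n j hj hle
    have hjpos : (0:ℝ) < j := by exact_mod_cast hj
    have hx : (0:ℝ) < r n / r (n+j) := div_pos (hpos n) (hpos (n+j))
    have h1 : r n / r (n+j) ≤ (1/B)^j := by
      have hp := pow_le_pow_left₀ (Real.rpow_nonneg hx.le _) hle j
      calc r n / r (n+j)
          = ((r n / r (n+j)) ^ ((1:ℝ)/j)) ^ j := by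
            rw [← Real.rpow_natCast ((r n / r (n+j)) ^ ((1:ℝ)/j)) j,
              ← Real.rpow_mul hx.le, one_div,
              inv_mul_cancel₀ (ne_of_gt hjpos), Real.rpow_one]
        _ ≤ (1/B)^j := hp
    have hBj : (0:ℝ) < B^j := pow_pos hBpos j
    rw [one_div, inv_pow, ← one_div, div_le_div_iff₀ (hpos (n+j)) hBj] at h1
    linarith
  -- milestone claim
  have claim : ∀ n : ℕ, ∃ m : ℕ, m ≤ n ∧ n < m + 5 ∧ B^m ≤ r m := by
    intro n
    induction n with
    | zero => exact ⟨0, le_refl 0, by norm_num, by rw [h0]; norm_num⟩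
    | succ n ih =>
      obtain ⟨m, hm1, hm2, hm3⟩ := ih
      by_cases hc : n + 1 < m + 5
      · exact ⟨m, le_trans hm1 (Nat.le_succ n), hc, hm3⟩
      · obtain ⟨j, hj1, hj5, hjle⟩ := hmin m
        refine ⟨m + j, by omega, by omega, ?_⟩
        calc B^(m+j) = B^j * B^m := by ring
          _ ≤ B^j * r m := mul_le_mul_of_nonneg_left hm3 (pow_pos hBpos j).le
          _ ≤ r (m+j) := hstep m j hj1 hjle
  -- r (m+k) ≥ g^k * r m
  have hdown : ∀ m k : ℕ, g^k * r m ≤ r (m+k) := by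
    intro m k
    induction k with
    | zero => simp
    | succ k ih =>
      have h1 : r (m+k) / r (m+k+1) ≤ G := hratio (m+k)
      have h2 : g * r (m+k) ≤ r (m+k+1) := by
        rw [div_le_iff₀ (hpos (m+k+1))] at h1
        nlinarith [hpos (m+k+1)]
      calc g^(k+1) * r m = g * (g^k * r m) := by ring
        _ ≤ g * r (m+k) := mul_le_mul_of_nonneg_left ih hgpos.le
        _ ≤ r (m+k+1) := h2
  intro n
  obtain ⟨m, hm1, hm2, hm3⟩ := claim n
  obtain ⟨k, rfl⟩ : ∃ k, n = m + k := ⟨n - m, by omega⟩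
  have hk4 : k ≤ 4 := by omega
  have h1 : g^k * B^m ≤ r (m+k) :=
    calc g^k * B^m ≤ g^k * r m :=
        mul_le_mul_of_nonneg_left hm3 (pow_nonneg hgpos.le _)
      _ ≤ r (m+k) := hdown m k
  have hgB : g/B ≤ 1 := by rw [div_le_one hBpos]; linarith
  have hgB0 : 0 ≤ g/B := div_nonneg hgpos.le hBpos.le
  have h3 : (g/B)^4 ≤ (g/B)^k := pow_le_pow_of_le_one hgB0 hgB hk4
  have h2 : q * B^(m+k) ≤ g^k * B^m := by
    have hBne : B ≠ 0 := ne_of_gt hBpos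
    have heq : (g/B)^k * B^(m+k) = g^k * B^m := by
      rw [div_pow, pow_add]
      field_simp
    calc q * B^(m+k) ≤ (g/B)^k * B^(m+k) := by
          rw [hq]
          exact mul_le_mul_of_nonneg_right h3 (pow_pos hBpos (m+k)).le
      _ = g^k * B^m := heq
  linarith
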